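/- The Hilbert cube Q = ∏_{i=1}^∞ [−1,1], endowed with the product topology, is homogeneous: for every pair of points x, y ∈ Q there exists a homeomorphism h : Q → Q with h(x) = y. -/

import Mathlib

/-- The Hilbert cube: the countably infinite product `∏_{i} [-1,1]`,
endowed with the product topology. -/
abbrev HilbertCube : Type := ℕ → (Set.Icc (-1 : ℝ) 1)

open Set Filter Topology

namespace HC

/-- piecewise-linear map sending `a ↦ b`, `[-1,a] → [-1,b]` and `[a,1] → [b,1]` affinely. -/
noncomputable def pl (a b s : ℝ) : ℝ :=
  if s ≤ a then -1 + (s + 1) * ((b + 1) / (a + 1))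
  else 1 - (1 - s) * ((1 - b) / (1 - a))

variable {a b : ℝ}

theorem pl_self (ha : -1 < a) (s : ℝ) (hs : s ∈ Icc (-1:ℝ) 1) : pl a a s = s := by
  unfold pl
  have h1 : a + 1 ≠ 0 := by linarith
  split_ifs with h
  · field_simp; ring
  · rcases eq_or_ne a 1 with rfl | h2
    · simp at h; nlinarith [hs.2]
    · have : 1 - a ≠ 0 := by intro h3; apply h2; linarith
      field_simp; ring

theorem pl_apply_self (ha : -1 < a) (hb : -1 < b) : pl a b a = b := by
  unfold pl
  have h1 : a + 1 ≠ 0 := by linarith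
  simp only [le_refl, if_true]
  field_simp; ring

theorem pl_mem (ha1 : -1 < a) (ha2 : a < 1) (hb1 : -1 ≤ b) (hb2 : b ≤ 1)
    {s : ℝ} (hs : s ∈ Icc (-1:ℝ) 1) : pl a b s ∈ Icc (-1:ℝ) 1 := by
  obtain ⟨hs1, hs2⟩ := hs
  unfold pl
  split_ifs with h
  · constructor
    · nlinarith [div_nonneg (by linarith : (0:ℝ) ≤ b + 1) (by linarith : (0:ℝ) ≤ a + 1)]
    · have : (s + 1) * ((b + 1) / (a + 1)) ≤ (a + 1) * ((b + 1) / (a + 1)) := by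
        apply mul_le_mul_of_nonneg_right (by linarith)
        exact div_nonneg (by linarith) (by linarith)
      have h2 : (a + 1) * ((b + 1) / (a + 1)) = b + 1 := by
        rw [mul_div_assoc']; rw [mul_comm]; rw [mul_div_assoc]; rw [div_self (by linarith : a + 1 ≠ 0)]; ring
      nlinarith
  · push_neg at h
    constructor
    · have : (1 - s) * ((1 - b) / (1 - a)) ≤ (1 - a) * ((1 - b) / (1 - a)) := by
        apply mul_le_mul_of_nonneg_right (by linarith)
        exact div_nonneg (by linarith) (by linarith)
      have h2 : (1 - a) * ((1 - b) / (1 - a)) = 1 - b := by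
        rw [mul_div_assoc']; rw [mul_comm]; rw [mul_div_assoc]; rw [div_self (by linarith : 1 - a ≠ 0)]; ring
      nlinarith
    · nlinarith [mul_nonneg (by linarith : (0:ℝ) ≤ 1 - s)
        (div_nonneg (by linarith : (0:ℝ) ≤ 1 - b) (by linarith : (0:ℝ) ≤ 1 - a))]

theorem pl_left_inv (ha1 : -1 < a) (ha2 : a < 1) (hb1 : -1 < b) (hb2 : b < 1)
    {s : ℝ} (hs : s ∈ Icc (-1:ℝ) 1) : pl b a (pl a b s) = s := by
  obtain ⟨hs1, hs2⟩ := hs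
  have hA : (0:ℝ) < a + 1 := by linarith
  have hB : (0:ℝ) < b + 1 := by linarith
  have hA' : (0:ℝ) < 1 - a := by linarith
  have hB' : (0:ℝ) < 1 - b := by linarith
  unfold pl
  split_ifs with h h2 h3
  · field_simp; ring
  · exfalso; apply h2
    have : (s + 1) * ((b + 1) / (a + 1)) ≤ (a + 1) * ((b + 1) / (a + 1)) :=
      mul_le_mul_of_nonneg_right (by linarith) (le_of_lt (div_pos hB hA))
    have h4 : (a + 1) * ((b + 1) / (a + 1)) = b + 1 := by field_simp
    linarith
  · exfalso
    have : (1 - s) * ((1 - b) / (1 - a)) < (1 - a) * ((1 - b) / (1 - a)) :=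
      mul_lt_mul_of_pos_right (by linarith) (div_pos hB' hA')
    have h4 : (1 - a) * ((1 - b) / (1 - a)) = 1 - b := by field_simp
    linarith
  · push_neg at h h3
    field_simp; ring

theorem pl_continuous (ha1 : -1 < a) (ha2 : a < 1) : Continuous (pl a b) := by
  unfold pl
  apply Continuous.if_le
  · continuity
  · continuity
  · exact continuous_id
  · exact continuous_const
  · intro s hsa
    subst hsa
    have h1 : s + 1 ≠ 0 := by linarith
    have h2 : (1:ℝ) - s ≠ 0 := by linarith
    field_simp; ring


noncomputable def intervalHomeo (a b : Icc (-1:ℝ) 1) (ha : |(a:ℝ)| < 1) (hb : |(b:ℝ)| < 1) :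
    Icc (-1:ℝ) 1 ≃ₜ Icc (-1:ℝ) 1 where
  toFun s := ⟨pl a b s, pl_mem (abs_lt.1 ha).1 (abs_lt.1 ha).2
    (abs_lt.1 hb).1.le (abs_lt.1 hb).2.le s.2⟩
  invFun s := ⟨pl b a s, pl_mem (abs_lt.1 hb).1 (abs_lt.1 hb).2
    (abs_lt.1 ha).1.le (abs_lt.1 ha).2.le s.2⟩
  left_inv s := Subtype.ext (pl_left_inv (abs_lt.1 ha).1 (abs_lt.1 ha).2
    (abs_lt.1 hb).1 (abs_lt.1 hb).2 s.2)
  right_inv s := Subtype.ext (pl_left_inv (abs_lt.1 hb).1 (abs_lt.1 hb).2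
    (abs_lt.1 ha).1 (abs_lt.1 ha).2 s.2)
  continuous_toFun := Continuous.subtype_mk
    ((pl_continuous (abs_lt.1 ha).1 (abs_lt.1 ha).2).comp continuous_subtype_val) _
  continuous_invFun := Continuous.subtype_mk
    ((pl_continuous (abs_lt.1 hb).1 (abs_lt.1 hb).2).comp continuous_subtype_val) _

theorem intervalHomeo_self (a b : Icc (-1:ℝ) 1) (ha : |(a:ℝ)| < 1) (hb : |(b:ℝ)| < 1) :
    intervalHomeo a b ha hb a = b := by
  apply Subtype.ext
  exact pl_apply_self (abs_lt.1 ha).1 (abs_lt.1 hb).1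

def negHomeo : Icc (-1:ℝ) 1 ≃ₜ Icc (-1:ℝ) 1 where
  toFun s := ⟨-s, by constructor <;> [linarith [s.2.2]; linarith [s.2.1]]⟩
  invFun s := ⟨-s, by constructor <;> [linarith [s.2.2]; linarith [s.2.1]]⟩
  left_inv s := Subtype.ext (by simp)
  right_inv s := Subtype.ext (by simp)
  continuous_toFun := Continuous.subtype_mk (continuous_subtype_val.neg)
    (fun x => by simp only [Pi.neg_apply]; constructor <;> [linarith [x.2.2]; linarith [x.2.1]])
  continuous_invFun := Continuous.subtype_mk (continuous_subtype_val.neg)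
    (fun x => by simp only [Pi.neg_apply]; constructor <;> [linarith [x.2.2]; linarith [x.2.1]])


def msup (p : ℝ × ℝ) : ℝ := max |p.1| |p.2|

def Amap (t : ℝ) (p : ℝ × ℝ) : ℝ × ℝ := (p.1 - t * p.2, t * p.1 + p.2)

noncomputable def ft (t : ℝ) (p : ℝ × ℝ) : ℝ × ℝ := (msup p / msup (Amap t p)) • Amap t p

theorem msup_nonneg (p : ℝ × ℝ) : 0 ≤ msup p := le_max_of_le_left (abs_nonneg _)

theorem abs_fst_le (p : ℝ × ℝ) : |p.1| ≤ msup p := le_max_left _ _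
theorem abs_snd_le (p : ℝ × ℝ) : |p.2| ≤ msup p := le_max_right _ _

theorem msup_pos {p : ℝ × ℝ} (hp : p ≠ 0) : 0 < msup p := by
  rcases lt_or_eq_of_le (msup_nonneg p) with h | h
  · exact h
  · exfalso; apply hp
    have h1 : |p.1| ≤ 0 := h ▸ abs_fst_le p
    have h2 : |p.2| ≤ 0 := h ▸ abs_snd_le p
    have := abs_nonneg p.1
    have := abs_nonneg p.2
    ext <;> [exact abs_eq_zero.1 (le_antisymm h1 (abs_nonneg _));
             exact abs_eq_zero.1 (le_antisymm h2 (abs_nonneg _))]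

theorem msup_smul (c : ℝ) (p : ℝ × ℝ) : msup (c • p) = |c| * msup p := by
  simp only [msup, Prod.smul_fst, Prod.smul_snd, smul_eq_mul, abs_mul]
  rcases le_total |p.1| |p.2| with h | h
  · rw [max_eq_right h, max_eq_right (by nlinarith [abs_nonneg c] : |c| * |p.1| ≤ |c| * |p.2|)]
  · rw [max_eq_left h, max_eq_left (by nlinarith [abs_nonneg c] : |c| * |p.2| ≤ |c| * |p.1|)]

theorem msup_Amap_le (t : ℝ) (p : ℝ × ℝ) : msup (Amap t p) ≤ (1 + |t|) * msup p := by
  have h1 := abs_fst_le p; have h2 := abs_snd_le p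
  have := abs_nonneg t
  apply max_le
  · calc |p.1 - t * p.2| ≤ |p.1| + |t * p.2| := abs_sub _ _
      _ ≤ msup p + |t| * msup p := by rw [abs_mul]; gcongr
      _ = (1 + |t|) * msup p := by ring
  · calc |t * p.1 + p.2| ≤ |t * p.1| + |p.2| := abs_add_le _ _
      _ ≤ |t| * msup p + msup p := by rw [abs_mul]; gcongr
      _ = (1 + |t|) * msup p := by ring

theorem msup_Amap_ge (t : ℝ) (p : ℝ × ℝ) : (1 - |t|) * msup p ≤ msup (Amap t p) := by
  have h1 := abs_fst_le p; have h2 := abs_snd_le p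
  have ht := abs_nonneg t
  rcases max_cases |p.1| |p.2| with ⟨he, _⟩ | ⟨he, _⟩ <;>
    [apply le_max_of_le_left; apply le_max_of_le_right]
  · have h3 : |p.1| - |t * p.2| ≤ |p.1 - t * p.2| := by
      have := abs_sub_abs_le_abs_sub p.1 (t * p.2)
      linarith
    rw [abs_mul] at h3
    have he' : msup p = |p.1| := he
    have hA1 : (Amap t p).1 = p.1 - t * p.2 := rfl
    rw [hA1, he']
    nlinarith [abs_nonneg t, abs_nonneg p.1, abs_nonneg p.2]
  · have h3 : |p.2| - |t * p.1| ≤ |t * p.1 + p.2| := by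
      have h4 : |p.2| = |(t * p.1 + p.2) - t * p.1| := by norm_num
      have h5 := abs_sub (t * p.1 + p.2) (t * p.1)
      linarith [h4 ▸ h5]
    rw [abs_mul] at h3
    have he' : msup p = |p.2| := he
    have hA2 : (Amap t p).2 = t * p.1 + p.2 := rfl
    rw [hA2, he']
    nlinarith [abs_nonneg t, abs_nonneg p.1, abs_nonneg p.2]

theorem msup_Amap_pos {t : ℝ} (ht : |t| < 1) {p : ℝ × ℝ} (hp : p ≠ 0) :
    0 < msup (Amap t p) := by
  have := msup_Amap_ge t p
  have := msup_pos hp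
  nlinarith

theorem Amap_smul (t c : ℝ) (p : ℝ × ℝ) : Amap t (c • p) = c • Amap t p := by
  unfold Amap; ext <;> simp <;> ring

theorem Amap_comp (t : ℝ) (p : ℝ × ℝ) : Amap (-t) (Amap t p) = (1 + t^2) • p := by
  unfold Amap; ext <;> simp <;> ring

theorem ft_zero (t : ℝ) : ft t 0 = 0 := by
  unfold ft Amap
  simp

theorem msup_ft {t : ℝ} (ht : |t| < 1) (p : ℝ × ℝ) : msup (ft t p) = msup p := by
  rcases eq_or_ne p 0 with rfl | hp
  · rw [ft_zero]
  · have hM := msup_Amap_pos ht hp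
    rw [ft, msup_smul, abs_div, abs_of_nonneg (msup_nonneg p), abs_of_nonneg hM.le,
      div_mul_cancel₀]
    exact hM.ne'

theorem ft_invol {t : ℝ} (ht : |t| < 1) (p : ℝ × ℝ) : ft (-t) (ft t p) = p := by
  rcases eq_or_ne p 0 with rfl | hp
  · rw [ft_zero, ft_zero]
  · have hm := msup_pos hp
    have hM := msup_Amap_pos ht hp
    have h1t : (0:ℝ) < 1 + t^2 := by positivity
    set c := msup p / msup (Amap t p) with hc
    have hcpos : 0 < c := div_pos hm hM
    have hA' : Amap (-t) (ft t p) = (c * (1 + t^2)) • p := by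
      rw [ft, ← hc, Amap_smul, Amap_comp, smul_smul]
    have hms : msup (Amap (-t) (ft t p)) = c * (1 + t^2) * msup p := by
      rw [hA', msup_smul, abs_of_pos (by positivity)]
    rw [ft, msup_ft ht, hms, hA', smul_smul]
    have hone : msup p / (c * (1 + t ^ 2) * msup p) * (c * (1 + t ^ 2)) = 1 := by
      field_simp
    rw [hone, one_smul]

theorem dist_zero_msup (q : ℝ × ℝ) : dist q 0 = msup q := by
  rw [Prod.dist_eq]
  simp [Real.dist_eq, msup]

theorem ft_continuous {t : ℝ} (ht : |t| < 1) : Continuous (ft t) := by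
  have hA : Continuous (Amap t) := by
    unfold Amap; fun_prop
  have hmsup : Continuous msup := by
    unfold msup; fun_prop
  rw [continuous_iff_continuousAt]
  intro p
  rcases eq_or_ne p 0 with rfl | hp
  · rw [Metric.continuousAt_iff]
    intro ε hε
    exact ⟨ε, hε, fun {q} hq => by
      rw [ft_zero, dist_zero_msup, msup_ft ht]
      rwa [dist_zero_msup] at hq⟩
  · exact ((hmsup.continuousAt.div ((hmsup.comp hA).continuousAt)
      (msup_Amap_pos ht hp).ne').smul hA.continuousAt)

theorem ft_first_close {t : ℝ} (ht : |t| ≤ 1/2) {p : ℝ × ℝ} (hp : msup p ≤ 1) :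
    |(ft t p).1 - p.1| ≤ 4 * |t| := by
  rcases eq_or_ne p 0 with rfl | hp0
  · rw [ft_zero]; simp [abs_nonneg]
  · have ht1 : |t| < 1 := lt_of_le_of_lt ht (by norm_num)
    have hm := msup_pos hp0
    have hM := msup_Amap_pos ht1 hp0
    have hML := msup_Amap_le t p
    have hMG := msup_Amap_ge t p
    have h1 := abs_fst_le p; have h2 := abs_snd_le p
    have hA1 : (Amap t p).1 = p.1 - t * p.2 := rfl
    have hf1 : (ft t p).1 = msup p / msup (Amap t p) * (Amap t p).1 := rfl
    have habs : (ft t p).1 - p.1 =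
        ((msup p - msup (Amap t p)) * p.1 - msup p * (t * p.2)) / msup (Amap t p) := by
      rw [hf1, hA1]
      field_simp
      ring
    rw [habs, abs_div, abs_of_nonneg hM.le, div_le_iff₀ hM]
    have e1 : |(msup p - msup (Amap t p)) * p.1| ≤ |t| * msup p * msup p := by
      rw [abs_mul]
      have : |msup p - msup (Amap t p)| ≤ |t| * msup p := by
        rw [abs_le]; constructor <;> nlinarith
      nlinarith [abs_nonneg p.1]
    have e2 : |msup p * (t * p.2)| ≤ msup p * (|t| * msup p) := by
      rw [abs_mul, abs_mul, abs_of_nonneg (msup_nonneg p)]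
      nlinarith [abs_nonneg t]
    have e3 := abs_sub ((msup p - msup (Amap t p)) * p.1) (msup p * (t * p.2))
    have e4 : (0:ℝ) ≤ |t| := abs_nonneg t
    nlinarith

theorem ft_first_interior {t : ℝ} (ht : |t| < 1) {p : ℝ × ℝ} (hp : msup p ≤ 1)
    (hp0 : 0 < msup p) (hA : |(Amap t p).1| < msup (Amap t p)) : |(ft t p).1| < 1 := by
  have hp0' : p ≠ 0 := by
    intro h; rw [h] at hp0; simp [msup] at hp0
  have hM := msup_Amap_pos ht hp0'
  have hf1 : (ft t p).1 = msup p / msup (Amap t p) * (Amap t p).1 := rfl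
  have key : |(ft t p).1| = (msup p / msup (Amap t p)) * |(Amap t p).1| := by
    rw [hf1, abs_mul]
    congr 1
    exact abs_of_nonneg (div_nonneg (msup_nonneg p) hM.le)
  rw [key]
  calc msup p / msup (Amap t p) * |(Amap t p).1| <
      msup p / msup (Amap t p) * msup (Amap t p) := by
        apply mul_lt_mul_of_pos_left hA (div_pos hp0 hM)
    _ = msup p := div_mul_cancel₀ _ hM.ne'
    _ ≤ 1 := hp


/-! ### the square homeomorphism on `Icc (-1) 1 × Icc (-1) 1` -/

theorem msup_le_one (p : Icc (-1:ℝ) 1 × Icc (-1:ℝ) 1) : msup ((p.1 : ℝ), (p.2 : ℝ)) ≤ 1 :=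
  max_le (abs_le.2 ⟨p.1.2.1, p.1.2.2⟩) (abs_le.2 ⟨p.2.2.1, p.2.2.2⟩)

noncomputable def ftHomeo (t : ℝ) (ht : |t| < 1) :
    (Icc (-1:ℝ) 1 × Icc (-1:ℝ) 1) ≃ₜ (Icc (-1:ℝ) 1 × Icc (-1:ℝ) 1) where
  toFun p := (⟨(ft t ((p.1 : ℝ), (p.2 : ℝ))).1,
      abs_le.1 (le_trans (abs_fst_le _) (by rw [msup_ft ht]; exact msup_le_one p))⟩,
    ⟨(ft t ((p.1 : ℝ), (p.2 : ℝ))).2,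
      abs_le.1 (le_trans (abs_snd_le _) (by rw [msup_ft ht]; exact msup_le_one p))⟩)
  invFun p := (⟨(ft (-t) ((p.1 : ℝ), (p.2 : ℝ))).1,
      abs_le.1 (le_trans (abs_fst_le _) (by rw [msup_ft (abs_neg t ▸ ht)]; exact msup_le_one p))⟩,
    ⟨(ft (-t) ((p.1 : ℝ), (p.2 : ℝ))).2,
      abs_le.1 (le_trans (abs_snd_le _) (by rw [msup_ft (abs_neg t ▸ ht)]; exact msup_le_one p))⟩)
  left_inv p := by
    have h := ft_invol ht ((p.1 : ℝ), (p.2 : ℝ))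
    exact Prod.ext (Subtype.ext (congrArg Prod.fst h)) (Subtype.ext (congrArg Prod.snd h))
  right_inv p := by
    have h := ft_invol (abs_neg t ▸ ht) ((p.1 : ℝ), (p.2 : ℝ))
    rw [neg_neg] at h
    exact Prod.ext (Subtype.ext (congrArg Prod.fst h)) (Subtype.ext (congrArg Prod.snd h))
  continuous_toFun := by
    have hq : Continuous (fun p : Icc (-1:ℝ) 1 × Icc (-1:ℝ) 1 => ((p.1 : ℝ), (p.2 : ℝ))) :=
      (continuous_subtype_val.comp continuous_fst).prodMk
        (continuous_subtype_val.comp continuous_snd)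
    exact ((continuous_fst.comp ((ft_continuous ht).comp hq)).subtype_mk _).prodMk
      ((continuous_snd.comp ((ft_continuous ht).comp hq)).subtype_mk _)
  continuous_invFun := by
    have hq : Continuous (fun p : Icc (-1:ℝ) 1 × Icc (-1:ℝ) 1 => ((p.1 : ℝ), (p.2 : ℝ))) :=
      (continuous_subtype_val.comp continuous_fst).prodMk
        (continuous_subtype_val.comp continuous_snd)
    exact ((continuous_fst.comp ((ft_continuous (abs_neg t ▸ ht)).comp hq)).subtype_mk _).prodMk
      ((continuous_snd.comp ((ft_continuous (abs_neg t ▸ ht)).comp hq)).subtype_mk _)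

theorem ftHomeo_fst (t : ℝ) (ht : |t| < 1) (p : Icc (-1:ℝ) 1 × Icc (-1:ℝ) 1) :
    ((ftHomeo t ht p).1 : ℝ) = (ft t ((p.1 : ℝ), (p.2 : ℝ))).1 := rfl

theorem ftHomeo_first_close {t : ℝ} (ht1 : |t| < 1) (ht : |t| ≤ 1/2)
    (p : Icc (-1:ℝ) 1 × Icc (-1:ℝ) 1) :
    |((ftHomeo t ht1 p).1 : ℝ) - (p.1 : ℝ)| ≤ 4 * |t| := by
  rw [ftHomeo_fst]
  exact ft_first_close ht (msup_le_one p)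

theorem exists_rho_one (t : ℝ) (ht0 : 0 < t) (ht : t ≤ 1/2) (v : Icc (-1:ℝ) 1) :
    ∃ ρ : (Icc (-1:ℝ) 1 × Icc (-1:ℝ) 1) ≃ₜ (Icc (-1:ℝ) 1 × Icc (-1:ℝ) 1),
      (∀ p, |((ρ p).1 : ℝ) - (p.1 : ℝ)| ≤ 4 * t) ∧
      ∀ u : Icc (-1:ℝ) 1, (u : ℝ) = 1 → |((ρ (u, v)).1 : ℝ)| < 1 := by
  have ht1 : |t| < 1 := by rw [abs_of_pos ht0]; linarith
  have ht2 : |t| ≤ 1/2 := by rw [abs_of_pos ht0]; linarith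
  have habs : |t| = t := abs_of_pos ht0
  have ht1' : |(-t)| < 1 := by rwa [abs_neg]
  have ht2' : |(-t)| ≤ 1/2 := by rwa [abs_neg]
  rcases eq_or_ne (v : ℝ) 1 with hv | hv1
  · refine ⟨ftHomeo t ht1, fun p => by
      have := ftHomeo_first_close ht1 ht2 p; rwa [habs] at this, fun u hu => ?_⟩
    rw [ftHomeo_fst]
    have hpair : ((((u, v).1 : Icc (-1:ℝ) 1) : ℝ), (((u, v).2 : Icc (-1:ℝ) 1) : ℝ))
        = ((1:ℝ), (1:ℝ)) := by rw [hu, hv]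
    rw [hpair]
    apply ft_first_interior ht1
    · apply max_le <;> norm_num
    · apply lt_max_of_lt_left; norm_num
    · have hA : Amap t (1, 1) = (1 - t, t + 1) := by unfold Amap; norm_num
      rw [hA]
      have h1 : |(1:ℝ) - t| = 1 - t := abs_of_nonneg (by linarith)
      have h2 : |t + (1:ℝ)| = t + 1 := abs_of_nonneg (by linarith)
      show |(1:ℝ) - t| < max |(1:ℝ) - t| |t + 1|
      rw [h1, h2]
      exact lt_max_of_lt_right (by linarith)
  rcases eq_or_ne (v : ℝ) (-1) with hv | hvm1
  · refine ⟨ftHomeo (-t) ht1', fun p => ?_, fun u hu => ?_⟩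
    · have := ftHomeo_first_close ht1' ht2' p
      rwa [abs_neg, habs] at this
    · rw [ftHomeo_fst]
      have hpair : ((((u, v).1 : Icc (-1:ℝ) 1) : ℝ), (((u, v).2 : Icc (-1:ℝ) 1) : ℝ))
          = ((1:ℝ), (-1:ℝ)) := by rw [hu, hv]
      rw [hpair]
      apply ft_first_interior ht1'
      · apply max_le <;> norm_num
      · apply lt_max_of_lt_left; norm_num
      · have hA : Amap (-t) (1, -1) = (1 - t, -(t + 1)) := by unfold Amap; norm_num; ring
        rw [hA]
        have h1 : |(1:ℝ) - t| = 1 - t := abs_of_nonneg (by linarith)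
        have h2 : |-(t + (1:ℝ))| = t + 1 := by rw [abs_neg]; exact abs_of_nonneg (by linarith)
        show |(1:ℝ) - t| < max |(1:ℝ) - t| |-(t + 1)|
        rw [h1, h2]
        exact lt_max_of_lt_right (by linarith)
  -- interior case for v
  · have hv : |(v : ℝ)| < 1 := by
      rcases abs_le.2 ⟨v.2.1, v.2.2⟩ |>.lt_or_eq with h | h
      · exact h
      · exfalso; rcases abs_eq (by norm_num : (0:ℝ) ≤ 1) |>.1 h with h' | h'
        · exact hv1 h'
        · exact hvm1 h'
    set w : Icc (-1:ℝ) 1 := ⟨1 - t^2, by constructor <;> nlinarith⟩ with hwdef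
    have hw : |(w : ℝ)| < 1 := by
      show |1 - t^2| < 1
      rw [abs_lt]; constructor <;> nlinarith
    refine ⟨(Homeomorph.prodCongr (Homeomorph.refl _) (intervalHomeo v w hv hw)).trans
        (ftHomeo t ht1), fun p => ?_, fun u hu => ?_⟩
    · have := ftHomeo_first_close ht1 ht2 (p.1, intervalHomeo v w hv hw p.2)
      rwa [habs] at this
    · have hstep : (Homeomorph.prodCongr (Homeomorph.refl _) (intervalHomeo v w hv hw)) (u, v)
          = (u, w) := by
        have := intervalHomeo_self v w hv hw
        simp [Homeomorph.prodCongr, this]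
      show |((ftHomeo t ht1 ((Homeomorph.prodCongr (Homeomorph.refl _)
          (intervalHomeo v w hv hw)) (u, v))).1 : ℝ)| < 1
      rw [hstep, ftHomeo_fst]
      have hpair : (((((u, w) : _ × _).1 : Icc (-1:ℝ) 1) : ℝ), ((((u, w) : _ × _).2) : ℝ))
          = ((1:ℝ), 1 - t^2) := by rw [hu]
      rw [hpair]
      apply ft_first_interior ht1
      · apply max_le
        · norm_num
        · rw [abs_of_nonneg (by nlinarith : (0:ℝ) ≤ 1 - t^2)]; nlinarith
      · apply lt_max_of_lt_left; norm_num
      · have hA : Amap t (1, 1 - t^2) = (1 - t + t^3, t + 1 - t^2) := by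
          unfold Amap; norm_num; constructor <;> ring
        rw [hA]
        have h1 : |(1:ℝ) - t + t^3| = 1 - t + t^3 := abs_of_nonneg (by nlinarith)
        have h2 : |t + (1:ℝ) - t^2| = t + 1 - t^2 := abs_of_nonneg (by nlinarith)
        show |(1:ℝ) - t + t^3| < max |(1:ℝ) - t + t^3| |t + 1 - t^2|
        rw [h1, h2]
        exact lt_max_of_lt_right (by nlinarith)

theorem exists_rho (t : ℝ) (ht0 : 0 < t) (ht : t ≤ 1/2) (u v : Icc (-1:ℝ) 1) :
    ∃ ρ : (Icc (-1:ℝ) 1 × Icc (-1:ℝ) 1) ≃ₜ (Icc (-1:ℝ) 1 × Icc (-1:ℝ) 1),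
      (∀ p, |((ρ p).1 : ℝ) - (p.1 : ℝ)| ≤ 4 * t) ∧ |((ρ (u, v)).1 : ℝ)| < 1 := by
  by_cases hu : |(u : ℝ)| < 1
  · exact ⟨Homeomorph.refl _, fun p => by simp; positivity, by simpa⟩
  · have hu1 : (u : ℝ) = 1 ∨ (u : ℝ) = -1 := by
      have h1 : |(u : ℝ)| = 1 := le_antisymm (abs_le.2 ⟨u.2.1, u.2.2⟩) (not_lt.1 hu)
      exact (abs_eq (by norm_num : (0:ℝ) ≤ 1)).1 h1
    rcases hu1 with hu1 | hu1
    · obtain ⟨ρ, hΔ, hint⟩ := exists_rho_one t ht0 ht v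
      exact ⟨ρ, hΔ, hint u hu1⟩
    · obtain ⟨ρ, hΔ, hint⟩ := exists_rho_one t ht0 ht (negHomeo v)
      set N := Homeomorph.prodCongr negHomeo negHomeo with hN
      refine ⟨(N.trans ρ).trans N, fun p => ?_, ?_⟩
      · have h1 : ((((N.trans ρ).trans N) p).1 : ℝ) = -(((ρ (N p)).1 : ℝ)) := rfl
        have h2 : (((N p).1 : Icc (-1:ℝ) 1) : ℝ) = -((p.1 : Icc (-1:ℝ) 1) : ℝ) := rfl
        rw [h1]
        have := hΔ (N p)
        rw [h2] at this
        calc |-((ρ (N p)).1 : ℝ) - (p.1 : ℝ)| = |((ρ (N p)).1 : ℝ) - -((p.1 : Icc (-1:ℝ) 1) : ℝ)| := by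
              rw [← abs_neg]; congr 1; ring
          _ ≤ 4 * t := this
      · have h1 : ((((N.trans ρ).trans N) (u, v)).1 : ℝ) = -(((ρ (N (u, v))).1 : ℝ)) := rfl
        rw [h1, abs_neg]
        have hNu : N (u, v) = (negHomeo u, negHomeo v) := rfl
        have hnu : ((negHomeo u : Icc (-1:ℝ) 1) : ℝ) = 1 := by
          show -(u : ℝ) = 1; rw [hu1]; ring
        rw [hNu]
        exact hint (negHomeo u) hnu

/-! ### lifting a square homeomorphism to two coordinates of the cube -/

def swapFun (i j : ℕ)
    (f : (Icc (-1:ℝ) 1 × Icc (-1:ℝ) 1) → (Icc (-1:ℝ) 1 × Icc (-1:ℝ) 1))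
    (q : ℕ → Icc (-1:ℝ) 1) (k : ℕ) : Icc (-1:ℝ) 1 :=
  if k = i then (f (q i, q j)).1 else if k = j then (f (q i, q j)).2 else q k

theorem swapFun_i {i j : ℕ} {f} (q : ℕ → Icc (-1:ℝ) 1) :
    swapFun i j f q i = (f (q i, q j)).1 := if_pos rfl

theorem swapFun_j {i j : ℕ} {f} (hij : i ≠ j) (q : ℕ → Icc (-1:ℝ) 1) :
    swapFun i j f q j = (f (q i, q j)).2 := by
  unfold swapFun
  rw [if_neg (Ne.symm hij), if_pos rfl]

theorem swapFun_ne {i j k : ℕ} {f} (hk : k ≠ i) (hk2 : k ≠ j) (q : ℕ → Icc (-1:ℝ) 1) :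
    swapFun i j f q k = q k := by
  unfold swapFun
  rw [if_neg hk, if_neg hk2]

theorem swapFun_inv {i j : ℕ} (hij : i ≠ j) {f g}
    (hfg : ∀ p, g (f p) = p) (q : ℕ → Icc (-1:ℝ) 1) :
    swapFun i j g (swapFun i j f q) = q := by
  funext k
  have hqi := swapFun_i (i := i) (j := j) (f := f) q
  have hqj := swapFun_j (f := f) hij q
  have hpair : ((f (q i, q j)).1, (f (q i, q j)).2) = f (q i, q j) := rfl
  by_cases hk : k = i
  · subst hk
    rw [swapFun_i, hqi, hqj, hpair, hfg]
  · by_cases hk2 : k = j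
    · subst hk2
      rw [swapFun_j hij, hqi, hqj, hpair, hfg]
    · rw [swapFun_ne hk hk2, swapFun_ne hk hk2]

theorem swapFun_continuous (i j : ℕ)
    {f : (Icc (-1:ℝ) 1 × Icc (-1:ℝ) 1) → (Icc (-1:ℝ) 1 × Icc (-1:ℝ) 1)}
    (hf : Continuous f) : Continuous (swapFun i j f) := by
  apply continuous_pi
  intro k
  have hbase : Continuous fun q : ℕ → Icc (-1:ℝ) 1 => f (q i, q j) :=
    hf.comp ((continuous_apply i).prodMk (continuous_apply j))
  unfold swapFun
  by_cases hk : k = i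
  · subst hk; simp only [if_pos rfl]; exact continuous_fst.comp hbase
  · by_cases hk2 : k = j
    · simp only [if_neg hk, if_pos hk2]; exact continuous_snd.comp hbase
    · simp only [if_neg hk, if_neg hk2]; exact continuous_apply k

noncomputable def swapLift (i j : ℕ) (ρ : (Icc (-1:ℝ) 1 × Icc (-1:ℝ) 1) ≃ₜ
    (Icc (-1:ℝ) 1 × Icc (-1:ℝ) 1)) (hij : i ≠ j) :
    (ℕ → Icc (-1:ℝ) 1) ≃ₜ (ℕ → Icc (-1:ℝ) 1) where
  toFun := swapFun i j ρ
  invFun := swapFun i j ρ.symm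
  left_inv := swapFun_inv hij (fun p => ρ.symm_apply_apply p)
  right_inv := swapFun_inv hij (fun p => ρ.apply_symm_apply p)
  continuous_toFun := swapFun_continuous i j ρ.continuous
  continuous_invFun := swapFun_continuous i j ρ.symm.continuous

theorem swapLift_apply_i {i j : ℕ} {ρ} (hij : i ≠ j) (q : ℕ → Icc (-1:ℝ) 1) :
    swapLift i j ρ hij q i = (ρ (q i, q j)).1 := swapFun_i q

theorem swapLift_apply_j {i j : ℕ} {ρ} (hij : i ≠ j) (q : ℕ → Icc (-1:ℝ) 1) :
    swapLift i j ρ hij q j = (ρ (q i, q j)).2 := swapFun_j hij q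

theorem swapLift_apply_ne {i j k : ℕ} {ρ} (hij : i ≠ j) (hk : k ≠ i) (hk2 : k ≠ j)
    (q : ℕ → Icc (-1:ℝ) 1) : swapLift i j ρ hij q k = q k := swapFun_ne hk hk2 q


section
attribute [local instance] PiCountable.metricSpace

abbrev Q' : Type := ℕ → (Set.Icc (-1 : ℝ) 1)

theorem dist_le_two_coords (i j : ℕ) (hij : i ≠ j) (q q' : Q')
    (h : ∀ k, k ≠ i → k ≠ j → q k = q' k) :
    dist q q' ≤ dist (q i) (q' i) + (1/2)^j := by
  rw [PiCountable.dist_eq_tsum]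
  have hzero : ∀ k ∉ ({i, j} : Finset ℕ),
      min ((1/2)^(Encodable.encode k)) (dist (q k) (q' k)) = 0 := by
    intro k hk
    simp only [Finset.mem_insert, Finset.mem_singleton] at hk
    push_neg at hk
    rw [h k hk.1 hk.2, dist_self]
    exact min_eq_right (by positivity)
  rw [← one_div, tsum_eq_sum hzero, Finset.sum_pair hij]
  have h1 : min ((1/2:ℝ)^(Encodable.encode i)) (dist (q i) (q' i)) ≤ dist (q i) (q' i) :=
    min_le_right _ _
  have h2 : min ((1/2:ℝ)^(Encodable.encode j)) (dist (q j) (q' j)) ≤ (1/2)^j :=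
    le_trans (min_le_left _ _) (by norm_num [Encodable.encode])
  linarith

theorem exists_modulus (G : Q' → Q') (hG : Continuous G) (ε : ℝ) (hε : 0 < ε) :
    ∃ δ : ℝ, 0 < δ ∧ ∀ a b : Q', dist a b ≤ δ → dist (G a) (G b) ≤ ε := by
  obtain ⟨δ, hδ, hmod⟩ := Metric.uniformContinuous_iff.mp
    (CompactSpace.uniformContinuous_of_continuous hG) ε hε
  exact ⟨δ/2, by linarith, fun a b hab => le_of_lt (hmod (lt_of_le_of_lt hab (by linarith)))⟩

theorem icc_dist (a b : Icc (-1:ℝ) 1) : dist a b = |(a:ℝ) - (b:ℝ)| := by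
  rw [Subtype.dist_eq, Real.dist_eq]

/-! ### the recursion -/

structure Stage (x : Q') (n : ℕ) where
  G : Q' ≃ₜ Q'
  m : ℝ
  m_pos : 0 < m
  m_le : m ≤ (1/2)^n
  mod : ∀ a b : Q', dist a b ≤ m → dist (G.symm a) (G.symm b) ≤ (1/2)^n
  int : ∀ k, k < n → |((G x k : ℝ))| < 1

structure StepRes (x : Q') (n : ℕ) (s : Stage x n) where
  toStage : Stage x (n+1)
  m_mono : toStage.m ≤ s.m
  close : ∀ q, dist (toStage.G q) (s.G q) ≤ (1/2)^(n+1) * s.m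
  coord : ∀ (q : Q') (k : ℕ), k < n → toStage.G q k = s.G q k

noncomputable def init (x : Q') : Stage x 0 where
  G := Homeomorph.refl _
  m := 1/2
  m_pos := by norm_num
  m_le := by norm_num
  mod a b h := by
    simp only [Homeomorph.refl_symm, Homeomorph.refl_apply, id_eq, pow_zero]
    linarith
  int k hk := absurd hk (Nat.not_lt_zero k)

noncomputable def step (x : Q') (n : ℕ) (s : Stage x n) : StepRes x n s := by
  classical
  have hδ : 0 < (1/2:ℝ)^(n+1) * s.m := mul_pos (by positivity) s.m_pos
  set δ : ℝ := (1/2)^(n+1) * s.m with hδdef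
  set t : ℝ := min (δ/16) (1/2) with htdef
  have ht0 : 0 < t := lt_min (by positivity) (by norm_num)
  have ht2 : t ≤ 1/2 := min_le_right _ _
  have ht3 : t ≤ δ/16 := min_le_left _ _
  have hexN : ∃ N : ℕ, (1/2:ℝ)^N < δ/2 := exists_pow_lt_of_lt_one (by linarith)
    (by norm_num : (1/2:ℝ) < 1)
  set N := hexN.choose with hNdef
  have hN := hexN.choose_spec
  set c : ℕ := max N (n+1) with hcdef
  have hc1 : n + 1 ≤ c := le_max_right _ _
  have hcn : n ≠ c := by omega
  have hc2 : ((1:ℝ)/2)^c ≤ δ/2 :=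
    le_trans (pow_le_pow_of_le_one (by norm_num) (by norm_num) (le_max_left _ _)) hN.le
  have hexρ := exists_rho t ht0 ht2 (s.G x n) (s.G x c)
  set ρ := hexρ.choose with hρdef
  have hρΔ := hexρ.choose_spec.1
  have hρint := hexρ.choose_spec.2
  set g := swapLift n c ρ hcn with hgdef
  have hdisp : ∀ q : Q', dist (g q) q ≤ δ := by
    intro q
    have hbase := dist_le_two_coords n c hcn (g q) q
      (fun k hk hk2 => swapLift_apply_ne hcn hk hk2 q)
    have h1 : dist (g q n) (q n) ≤ 4 * t := by
      rw [icc_dist, swapLift_apply_i hcn]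
      exact hρΔ (q n, q c)
    calc dist (g q) q ≤ dist (g q n) (q n) + (1/2)^c := hbase
      _ ≤ 4 * t + δ/2 := by linarith
      _ ≤ δ := by linarith
  set G' := s.G.trans g with hG'def
  have hexε := exists_modulus (G'.symm) G'.symm.continuous ((1/2)^(n+1)) (by positivity)
  set ε' := hexε.choose with hε'def
  have hε'pos := hexε.choose_spec.1
  have hε'mod := hexε.choose_spec.2
  refine ⟨⟨G', min s.m (min ε' ((1/2)^(n+1))), ?_, ?_, ?_, ?_⟩, ?_, ?_, ?_⟩
  · exact lt_min s.m_pos (lt_min hε'pos (by positivity))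
  · exact le_trans (min_le_right _ _) (min_le_right _ _)
  · intro a b hab
    exact hε'mod a b (le_trans hab (le_trans (min_le_right _ _) (min_le_left _ _)))
  · intro k hk
    rcases Nat.lt_succ_iff_lt_or_eq.mp hk with hk | rfl
    · have hcoord : G' x k = s.G x k :=
        swapLift_apply_ne hcn (by omega) (by omega) (s.G x)
      rw [show G' x k = s.G x k from hcoord]
      exact s.int k hk
    · have hcoord : G' x k = (ρ (s.G x k, s.G x c)).1 := swapLift_apply_i hcn (s.G x)
      rw [show G' x k = (ρ (s.G x k, s.G x c)).1 from hcoord]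
      exact hρint
  · exact min_le_left _ _
  · intro q
    exact hdisp (s.G q)
  · intro q k hk
    exact swapLift_apply_ne hcn (by omega) (by omega) (s.G q)

noncomputable def stages (x : Q') : ∀ n : ℕ, Stage x n
  | 0 => init x
  | (n+1) => (step x n (stages x n)).toStage

theorem stages_succ (x : Q') (n : ℕ) :
    stages x (n+1) = (step x n (stages x n)).toStage := rfl

theorem stages_m_mono (x : Q') {n k : ℕ} (h : n ≤ k) : (stages x k).m ≤ (stages x n).m := by
  induction k, h using Nat.le_induction with
  | base => exact le_refl _
  | succ k hk ih => exact le_trans (step x k (stages x k)).m_mono ih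

theorem stages_coord (x : Q') (q : Q') (k : ℕ) {n : ℕ} (h : k < n) :
    (stages x n).G q k = (stages x (k+1)).G q k := by
  induction n, h using Nat.le_induction with
  | base => rfl
  | succ n hn ih =>
    rw [stages_succ, (step x n (stages x n)).coord q k (by omega), ih]

theorem stages_dist (x : Q') (q : Q') {n k : ℕ} (h : n ≤ k) :
    dist ((stages x k).G q) ((stages x n).G q) ≤ ((1/2)^n - (1/2)^k) * (stages x n).m := by
  induction k, h using Nat.le_induction with
  | base => simp
  | succ k hk ih =>
    have h1 : dist ((stages x (k+1)).G q) ((stages x k).G q) ≤ (1/2)^(k+1) * (stages x k).m :=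
      (step x k (stages x k)).close q
    have h2 := stages_m_mono x hk
    have h3 := (stages x n).m_pos
    have h4 : (0:ℝ) < (1/2)^(k+1) := by positivity
    have htri := dist_triangle ((stages x (k+1)).G q) ((stages x k).G q) ((stages x n).G q)
    have hps : ((1:ℝ)/2)^(k+1) = (1/2)^k * (1/2) := pow_succ _ _
    nlinarith

noncomputable def stairF (x : Q') : Q' → Q' := fun q k => (stages x (k+1)).G q k

theorem stairF_continuous (x : Q') : Continuous (stairF x) :=
  continuous_pi fun k => (continuous_apply k).comp (stages x (k+1)).G.continuous

theorem stairF_tendsto (x : Q') (q : Q') :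
    Tendsto (fun n => (stages x n).G q) atTop (𝓝 (stairF x q)) := by
  rw [tendsto_pi_nhds]
  intro k
  apply Tendsto.congr' _ (tendsto_const_nhds (x := stairF x q k))
  filter_upwards [eventually_ge_atTop (k+1)] with n hn
  exact (stages_coord x q k (by omega)).symm

theorem stairF_dist (x : Q') (q : Q') (n : ℕ) :
    dist (stairF x q) ((stages x n).G q) ≤ (1/2)^n * (stages x n).m := by
  have hten : Tendsto (fun k => dist ((stages x k).G q) ((stages x n).G q)) atTop
      (𝓝 (dist (stairF x q) ((stages x n).G q))) :=
    (stairF_tendsto x q).dist tendsto_const_nhds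
  apply le_of_tendsto hten
  filter_upwards [eventually_ge_atTop n] with k hk
  have h1 := stages_dist x q hk
  have h2 := (stages x n).m_pos
  have h3 : (0:ℝ) ≤ (1/2)^k := by positivity
  nlinarith

theorem stages_hseq_cauchy (x : Q') (z : Q') :
    CauchySeq (fun n => (stages x n).G.symm z) := by
  apply cauchySeq_of_le_geometric (1/2) 1 (by norm_num)
  intro n
  set a := (stages x (n+1)).G.symm z with ha
  have h1 : dist ((stages x (n+1)).G a) ((stages x n).G a) ≤ (1/2)^(n+1) * (stages x n).m :=
    (step x n (stages x n)).close a
  have h2 : (stages x (n+1)).G a = z := (stages x (n+1)).G.apply_symm_apply z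
  rw [h2] at h1
  have hm := (stages x n).m_pos
  have hc : (1/2:ℝ)^(n+1) ≤ 1 := by
    apply pow_le_one₀ <;> norm_num
  have h3 := (stages x n).mod z ((stages x n).G a) (by nlinarith)
  rw [(stages x n).G.symm_apply_apply] at h3
  rw [one_mul]
  calc dist ((stages x n).G.symm z) ((stages x (n+1)).G.symm z)
      = dist ((stages x n).G.symm z) a := rfl
    _ ≤ (1/2)^n := h3

noncomputable def stairH (x : Q') (z : Q') : Q' :=
  (cauchySeq_tendsto_of_complete (stages_hseq_cauchy x z)).choose

theorem stairH_tendsto (x : Q') (z : Q') :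
    Tendsto (fun n => (stages x n).G.symm z) atTop (𝓝 (stairH x z)) :=
  (cauchySeq_tendsto_of_complete (stages_hseq_cauchy x z)).choose_spec

theorem half_pow_tendsto : Tendsto (fun n : ℕ => (1/2:ℝ)^n) atTop (𝓝 0) := by
  apply tendsto_pow_atTop_nhds_zero_of_lt_one <;> norm_num

theorem stairH_stairF (x : Q') (q : Q') : stairH x (stairF x q) = q := by
  apply tendsto_nhds_unique (stairH_tendsto x (stairF x q))
  rw [tendsto_iff_dist_tendsto_zero]
  apply squeeze_zero (fun n => dist_nonneg) (g := fun n => (1/2:ℝ)^n) _ half_pow_tendsto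
  intro n
  have hm := (stages x n).m_pos
  have hmle := (stages x n).m_le
  have h1 := stairF_dist x q n
  have hc : (1/2:ℝ)^n ≤ 1 := by apply pow_le_one₀ <;> norm_num
  have h3 := (stages x n).mod (stairF x q) ((stages x n).G q) (by nlinarith)
  rw [(stages x n).G.symm_apply_apply] at h3
  exact h3

theorem stairF_stairH (x : Q') (z : Q') : stairF x (stairH x z) = z := by
  apply tendsto_nhds_unique (((stairF_continuous x).tendsto (stairH x z)).comp
    (stairH_tendsto x z))
  rw [tendsto_iff_dist_tendsto_zero]
  apply squeeze_zero (fun n => dist_nonneg) (g := fun n => (1/2:ℝ)^n) _ half_pow_tendsto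
  intro n
  have hm := (stages x n).m_pos
  have hmle := (stages x n).m_le
  have h1 := stairF_dist x ((stages x n).G.symm z) n
  rw [(stages x n).G.apply_symm_apply] at h1
  have hc : (1/2:ℝ)^n ≤ 1 := by apply pow_le_one₀ <;> norm_num
  have hpos : (0:ℝ) ≤ (1/2)^n := by positivity
  calc dist ((stairF x ∘ fun n => (stages x n).G.symm z) n) z
      = dist (stairF x ((stages x n).G.symm z)) z := rfl
    _ ≤ (1/2)^n * (stages x n).m := h1
    _ ≤ (1/2)^n := by nlinarith

theorem exists_interior_homeo (x : Q') :
    ∃ h : Q' ≃ₜ Q', ∀ k, |((h x k : ℝ))| < 1 := by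
  refine ⟨Continuous.homeoOfEquivCompactToT2
    (f := ⟨stairF x, stairH x, stairH_stairF x, stairF_stairH x⟩) (stairF_continuous x),
    fun k => ?_⟩
  show |((stairF x x k : ℝ))| < 1
  exact (stages x (k+1)).int k (Nat.lt_succ_self k)

end


theorem exists_to_center (x : Q') :
    ∃ h : Q' ≃ₜ Q', h x = fun _ => ⟨0, by norm_num⟩ := by
  obtain ⟨h1, hint⟩ := exists_interior_homeo x
  refine ⟨h1.trans (Homeomorph.piCongrRight fun k =>
    intervalHomeo (h1 x k) ⟨0, by norm_num⟩ (hint k) (by norm_num)), ?_⟩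
  funext k
  show (Homeomorph.piCongrRight fun k =>
    intervalHomeo (h1 x k) ⟨0, by norm_num⟩ (hint k) (by norm_num)) (h1 x) k = _
  show intervalHomeo (h1 x k) ⟨0, by norm_num⟩ (hint k) (by norm_num) (h1 x k) = _
  rw [intervalHomeo_self]

end HC

/-- The Hilbert cube is homogeneous: for every pair of points `x, y` there is a
self-homeomorphism taking `x` to `y`. -/
theorem hilbertCube_homogeneous (x y : HilbertCube) :
    ∃ h : HilbertCube ≃ₜ HilbertCube, h x = y := by
  obtain ⟨hx, hhx⟩ := HC.exists_to_center x
  obtain ⟨hy, hhy⟩ := HC.exists_to_center y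
  refine ⟨hx.trans hy.symm, ?_⟩
  show hy.symm (hx x) = y
  rw [hhx, ← hhy, Homeomorph.symm_apply_apply]
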